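/- Let C ⊆ F_q^n be a linear code of dimension k, minimum distance d and genus g = n+1−k−d ≥ 1, whose dual code has minimum distance d⊥ and genus g⊥ = k+1−d⊥ ≥ 1, and set r = g + g⊥. Suppose c_0, …, c_{r−2} ∈ ℚ satisfy W_C(x,y) = M_{n,n+1−k}(x,y) + (q−1)·Σ_{i=0}^{r−2} c_i·C(n,d+i)·(x−y)^{n−d−i}·y^{d+i}. Then the weight enumerator is determined by the numbers W_C^{(d)}, …, W_C^{(d+r−2)} via the identity W_C(x,y) = Σ_{w=d}^{d+r−2} W_C^{(w)}·λ_w(x,y) + Λ(x,y), where λ_w(x,y) = Σ_{s=w}^{d+r−2} C(n−w, n−s)·(x−y)^{n−s}·y^{s} for d ≤ w ≤ d+r−2, and Λ(x,y) = M_{n,n+1−k}(x,y) − Σ_{w=d+g}^{d+r−2} M_{n,n+1−k}^{(w)}·λ_w(x,y), with M_{n,n+1−k}^{(w)} the coefficient of x^{n−w}y^{w} in M_{n,n+1−k}(x,y). -/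

import Mathlib

/-- The number `W_C^{(w)}` of codewords of the linear code `C` of Hamming weight `w`. -/
noncomputable def wtCount {F : Type*} [Field F] [Fintype F] [DecidableEq F] {n : ℕ}
    (C : Submodule F (Fin n → F)) (w : ℕ) : ℕ :=
  Nat.card {c : Fin n → F // c ∈ C ∧ hammingNorm c = w}

/-- The homogeneous weight enumerator `W_C(x,y) = x^n + Σ_{w=d}^n W_C^{(w)} x^{n-w} y^w`
of a code `C` of minimum distance `d`, evaluated at rationals `x, y`. -/
noncomputable def wEnum {F : Type*} [Field F] [Fintype F] [DecidableEq F] {n : ℕ}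
    (C : Submodule F (Fin n → F)) (d : ℕ) (x y : ℚ) : ℚ :=
  x ^ n + ∑ w ∈ Finset.Icc d n, (wtCount C w : ℚ) * x ^ (n - w) * y ^ w

/-- The coefficient of `x^{n-w} y^w` in the MDS weight enumerator `M_{n,s}(x,y)`
(for `s ≤ w ≤ n`). -/
noncomputable def MdsCoeff (q n s w : ℕ) : ℚ :=
  (n.choose w : ℚ) * ∑ i ∈ Finset.range (w - s + 1),
    (-1 : ℚ) ^ i * (w.choose i : ℚ) * ((q : ℚ) ^ (w + 1 - s - i) - 1)

/-- The MDS weight enumerator `M_{n,s}(x,y)` over a field with `q` elements,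
evaluated at rationals `x, y`. -/
noncomputable def Mds (q n s : ℕ) (x y : ℚ) : ℚ :=
  x ^ n + ∑ w ∈ Finset.Icc s n, MdsCoeff q n s w * x ^ (n - w) * y ^ w

/-- The polynomial `λ_w(x,y) = Σ_{s=w}^{d+r-2} C(n−w, n−s)·(x−y)^{n−s}·y^{s}`,
where `r = g + g⊥`. -/
noncomputable def lamPoly (n d r w : ℕ) (x y : ℚ) : ℚ :=
  ∑ s ∈ Finset.Icc w (d + r - 2), ((n - w).choose (n - s) : ℚ) * (x - y) ^ (n - s) * y ^ s

section helpers

lemma coeff_ext (S : Finset ℕ) (F G : ℕ → ℚ)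
    (h : ∀ v : ℚ, ∑ s ∈ S, F s * v ^ s = ∑ s ∈ S, G s * v ^ s) :
    ∀ s ∈ S, F s = G s := by
  have hp : (∑ s ∈ S, Polynomial.monomial s (F s)) = ∑ s ∈ S, Polynomial.monomial s (G s) := by
    apply Polynomial.funext
    intro v
    simpa [Polynomial.eval_finset_sum, Polynomial.eval_monomial, mul_comm] using h v
  intro s hs
  have h2 := congrArg (fun p => Polynomial.coeff p s) hp
  simpa [Polynomial.finset_sum_coeff, Polynomial.coeff_monomial, hs] using h2

lemma swap_tri (A B : ℕ) (f : ℕ → ℕ → ℚ) :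
    ∑ w ∈ Finset.Icc A B, ∑ s ∈ Finset.Icc w B, f w s
      = ∑ s ∈ Finset.Icc A B, ∑ w ∈ Finset.Icc A s, f w s := by
  apply Finset.sum_comm'
  intro x y
  simp only [Finset.mem_Icc]
  omega

lemma pow_expand (u v : ℚ) {w n : ℕ} (hw : w ≤ n) :
    (u + v) ^ (n - w) * v ^ w
      = ∑ s ∈ Finset.Icc w n, ((n - w).choose (n - s) : ℚ) * (u ^ (n - s) * v ^ s) := by
  rw [add_pow, Finset.sum_mul, ← Finset.Ico_add_one_right_eq_Icc, Finset.sum_Ico_eq_sum_range,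
    show n + 1 - w = (n - w) + 1 from by omega, ← Finset.sum_range_reflect]
  apply Finset.sum_congr rfl
  intro i hi
  simp only [Finset.mem_range] at hi
  have e3 : n - w + 1 - 1 - i = n - w - i := by omega
  have e4 : n - (w + i) = n - w - i := by omega
  have e5 : n - w - (n - w - i) = i := by omega
  rw [e3, e4, e5, show (w + i) = i + w from by omega, pow_add]
  ring

lemma combine (d e B : ℕ) (hd : d ≤ e) (W M X : ℕ → ℚ) :
    ∑ w ∈ Finset.Icc d B, W w * X w - ∑ w ∈ Finset.Icc e B, M w * X w
      = ∑ w ∈ Finset.Icc d B, (W w - if e ≤ w then M w else 0) * X w := by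
  simp only [sub_mul, Finset.sum_sub_distrib]
  congr 1
  rw [← Finset.sum_subset (Finset.Icc_subset_Icc_left hd)]
  · exact Finset.sum_congr rfl fun w hw => by
      rw [if_pos (Finset.mem_Icc.mp hw).1]
  · intro w hw hnw
    simp only [Finset.mem_Icc] at hw hnw
    rw [if_neg (by omega)]
    ring

end helpers

/-- The weight enumerator of a linear code `C ⊆ F_q^n` of dimension `k`, minimum
distance `d` and genus `g = n+1−k−d ≥ 1`, whose dual has minimum distance `d⊥`
and genus `g⊥ = k+1−d⊥ ≥ 1`, is determined by the numbers
`W_C^{(d)}, …, W_C^{(d+g+g⊥−2)}` via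
`W_C = Σ_{w=d}^{d+r−2} W_C^{(w)} λ_w + Λ`, with
`Λ = M_{n,n+1−k} − Σ_{w=d+g}^{d+r−2} M_{n,n+1−k}^{(w)} λ_w`. -/
theorem wenum_determined_by_low_weights {F : Type*} [Field F] [Fintype F] [DecidableEq F]
    {n k d dperp g gperp q : ℕ}
    (C Cd : Submodule F (Fin n → F))
    (hq : q = Fintype.card F)
    (hk : Module.finrank F C = k)
    (hd1 : ∀ c ∈ C, c ≠ 0 → d ≤ hammingNorm c)
    (hd2 : ∃ c ∈ C, c ≠ 0 ∧ hammingNorm c = d)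
    (hCd : ∀ y : Fin n → F, y ∈ Cd ↔ ∀ x ∈ C, ∑ i, x i * y i = 0)
    (hdp1 : ∀ c ∈ Cd, c ≠ 0 → dperp ≤ hammingNorm c)
    (hdp2 : ∃ c ∈ Cd, c ≠ 0 ∧ hammingNorm c = dperp)
    (hg : 1 ≤ g) (hgdef : n + 1 = k + d + g)
    (hgp : 1 ≤ gperp) (hgpdef : k + 1 = dperp + gperp)
    (c : ℕ → ℚ)
    (hW : ∀ x y : ℚ, wEnum C d x y =
      Mds q n (n + 1 - k) x y +
        ((q : ℚ) - 1) * ∑ i ∈ Finset.range (g + gperp - 1),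
          c i * ((n.choose (d + i) : ℚ)) * (x - y) ^ (n - d - i) * y ^ (d + i)) :
    ∀ x y : ℚ, wEnum C d x y =
      (∑ w ∈ Finset.Icc d (d + g + gperp - 2),
        (wtCount C w : ℚ) * lamPoly n d (g + gperp) w x y) +
      (Mds q n (n + 1 - k) x y -
        ∑ w ∈ Finset.Icc (d + g) (d + g + gperp - 2),
          MdsCoeff q n (n + 1 - k) w * lamPoly n d (g + gperp) w x y) := by
  intro x y
  have hdperp : 1 ≤ dperp := by
    obtain ⟨c0, hc0, hcne, hcnorm⟩ := hdp2
    rcases Nat.eq_zero_or_pos dperp with h0 | h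
    · exact absurd (hammingNorm_eq_zero.mp (hcnorm.trans h0)) hcne
    · exact h
  have hdg : n + 1 - k = d + g := by omega
  set m := d + g + gperp - 2 with hm
  have hmn : m ≤ n := by omega
  have hdm : d ≤ m := by omega
  set a : ℕ → ℚ :=
    fun w => (wtCount C w : ℚ) - (if d + g ≤ w then MdsCoeff q n (d + g) w else 0) with ha
  -- Claim A
  have keyA : ∀ u v : ℚ, ∑ w ∈ Finset.Icc d n, a w * ((u + v) ^ (n - w) * v ^ w)
      = ((q : ℚ) - 1) * ∑ i ∈ Finset.range (g + gperp - 1),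
          c i * (n.choose (d + i) : ℚ) * u ^ (n - d - i) * v ^ (d + i) := by
    intro u v
    have h := hW (u + v) v
    rw [hdg] at h
    simp only [wEnum, Mds, show ((u + v) - v : ℚ) = u from by ring] at h
    have hcomb := combine d (d + g) n (by omega) (fun w => (wtCount C w : ℚ))
      (fun w => MdsCoeff q n (d + g) w) (fun w => (u + v) ^ (n - w) * v ^ w)
    simp only [ha]
    rw [← hcomb]
    simp only [mul_assoc] at h ⊢
    linarith [h]
  set L : ℕ → ℚ := fun s => ∑ w ∈ Finset.Icc d s, a w * ((n - w).choose (n - s) : ℚ) with hLdef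
  set R : ℕ → ℚ := fun s =>
    if s ≤ m then ((q : ℚ) - 1) * (c (s - d) * (n.choose s : ℚ)) else 0 with hRdef
  have hLR : ∀ s ∈ Finset.Icc d n, L s = R s := by
    apply coeff_ext
    intro v
    have h := keyA 1 v
    have lhs_eq : ∑ w ∈ Finset.Icc d n, a w * ((1 + v) ^ (n - w) * v ^ w)
        = ∑ s ∈ Finset.Icc d n, L s * v ^ s := by
      calc ∑ w ∈ Finset.Icc d n, a w * ((1 + v) ^ (n - w) * v ^ w)
          = ∑ w ∈ Finset.Icc d n, ∑ s ∈ Finset.Icc w n,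
              a w * ((n - w).choose (n - s) : ℚ) * v ^ s := by
            refine Finset.sum_congr rfl fun w hw => ?_
            rw [pow_expand 1 v (Finset.mem_Icc.mp hw).2, Finset.mul_sum]
            exact Finset.sum_congr rfl fun s hs => by rw [one_pow]; ring
        _ = ∑ s ∈ Finset.Icc d n, ∑ w ∈ Finset.Icc d s,
              a w * ((n - w).choose (n - s) : ℚ) * v ^ s := swap_tri d n _
        _ = ∑ s ∈ Finset.Icc d n, L s * v ^ s := by
            refine Finset.sum_congr rfl fun s hs => ?_
            rw [hLdef, Finset.sum_mul]
    have rhs_eq : ((q : ℚ) - 1) * ∑ i ∈ Finset.range (g + gperp - 1),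
          c i * (n.choose (d + i) : ℚ) * (1 : ℚ) ^ (n - d - i) * v ^ (d + i)
        = ∑ s ∈ Finset.Icc d n, R s * v ^ s := by
      rw [Finset.mul_sum,
        ← Finset.sum_subset (Finset.Icc_subset_Icc_right hmn : Finset.Icc d m ⊆ Finset.Icc d n)
          (fun s hs hns => by
            simp only [Finset.mem_Icc] at hs hns
            rw [hRdef]
            simp only []
            rw [if_neg (by omega)]
            ring),
        ← Finset.Ico_add_one_right_eq_Icc, Finset.sum_Ico_eq_sum_range,
        show m + 1 - d = g + gperp - 1 from by omega]
      refine Finset.sum_congr rfl fun i hi => ?_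
      simp only [Finset.mem_range] at hi
      rw [hRdef]
      simp only []
      rw [if_pos (by omega : d + i ≤ m), show d + i - d = i from by omega, one_pow]
      ring
    rw [lhs_eq, rhs_eq] at h
    exact h
  have hL0 : ∀ s, m < s → s ≤ n → L s = 0 := by
    intro s h1 h2
    rw [hLR s (Finset.mem_Icc.mpr ⟨by omega, h2⟩), hRdef]
    simp only []
    exact if_neg (by omega)
  -- Final computation
  have hrm : d + (g + gperp) - 2 = m := by omega
  have lam_eq : ∀ w, lamPoly n d (g + gperp) w x y
      = ∑ s ∈ Finset.Icc w m, ((n - w).choose (n - s) : ℚ) * ((x - y) ^ (n - s) * y ^ s) := by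
    intro w
    rw [lamPoly, hrm]
    exact Finset.sum_congr rfl fun s hs => by ring
  have main : wEnum C d x y - Mds q n (d + g) x y
      = (∑ w ∈ Finset.Icc d m, (wtCount C w : ℚ) * lamPoly n d (g + gperp) w x y)
        - ∑ w ∈ Finset.Icc (d + g) m, MdsCoeff q n (d + g) w * lamPoly n d (g + gperp) w x y := by
    have hcombN := combine d (d + g) n (by omega) (fun w => (wtCount C w : ℚ))
      (fun w => MdsCoeff q n (d + g) w) (fun w => x ^ (n - w) * y ^ w)
    have hcombM := combine d (d + g) m (by omega) (fun w => (wtCount C w : ℚ))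
      (fun w => MdsCoeff q n (d + g) w) (fun w => lamPoly n d (g + gperp) w x y)
    have lhs_eq : wEnum C d x y - Mds q n (d + g) x y
        = ∑ s ∈ Finset.Icc d m, L s * ((x - y) ^ (n - s) * y ^ s) := by
      calc wEnum C d x y - Mds q n (d + g) x y
          = ∑ w ∈ Finset.Icc d n, (wtCount C w : ℚ) * (x ^ (n - w) * y ^ w)
            - ∑ w ∈ Finset.Icc (d + g) n, MdsCoeff q n (d + g) w * (x ^ (n - w) * y ^ w) := by
            simp only [wEnum, Mds, mul_assoc]
            ring
        _ = ∑ w ∈ Finset.Icc d n, a w * (x ^ (n - w) * y ^ w) := hcombN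
        _ = ∑ w ∈ Finset.Icc d n, ∑ s ∈ Finset.Icc w n,
              a w * ((n - w).choose (n - s) : ℚ) * ((x - y) ^ (n - s) * y ^ s) := by
            refine Finset.sum_congr rfl fun w hw => ?_
            have hpe := pow_expand (x - y) y (Finset.mem_Icc.mp hw).2
            rw [show (x - y) + y = x from by ring] at hpe
            rw [hpe, Finset.mul_sum]
            exact Finset.sum_congr rfl fun s hs => by ring
        _ = ∑ s ∈ Finset.Icc d n, ∑ w ∈ Finset.Icc d s,
              a w * ((n - w).choose (n - s) : ℚ) * ((x - y) ^ (n - s) * y ^ s) := swap_tri d n _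
        _ = ∑ s ∈ Finset.Icc d n, L s * ((x - y) ^ (n - s) * y ^ s) := by
            refine Finset.sum_congr rfl fun s hs => ?_
            rw [hLdef, Finset.sum_mul]
        _ = ∑ s ∈ Finset.Icc d m, L s * ((x - y) ^ (n - s) * y ^ s) := by
            rw [← Finset.sum_subset
              (Finset.Icc_subset_Icc_right hmn : Finset.Icc d m ⊆ Finset.Icc d n)]
            intro s hs hns
            simp only [Finset.mem_Icc] at hs hns
            rw [hL0 s (by omega) (by omega)]
            ring
    have rhs_eq : (∑ w ∈ Finset.Icc d m, (wtCount C w : ℚ) * lamPoly n d (g + gperp) w x y)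
        - ∑ w ∈ Finset.Icc (d + g) m, MdsCoeff q n (d + g) w * lamPoly n d (g + gperp) w x y
        = ∑ s ∈ Finset.Icc d m, L s * ((x - y) ^ (n - s) * y ^ s) := by
      calc (∑ w ∈ Finset.Icc d m, (wtCount C w : ℚ) * lamPoly n d (g + gperp) w x y)
          - ∑ w ∈ Finset.Icc (d + g) m, MdsCoeff q n (d + g) w * lamPoly n d (g + gperp) w x y
          = ∑ w ∈ Finset.Icc d m, a w * lamPoly n d (g + gperp) w x y := hcombM
        _ = ∑ w ∈ Finset.Icc d m, ∑ s ∈ Finset.Icc w m,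
              a w * ((n - w).choose (n - s) : ℚ) * ((x - y) ^ (n - s) * y ^ s) := by
            refine Finset.sum_congr rfl fun w hw => ?_
            rw [lam_eq, Finset.mul_sum]
            exact Finset.sum_congr rfl fun s hs => by ring
        _ = ∑ s ∈ Finset.Icc d m, ∑ w ∈ Finset.Icc d s,
              a w * ((n - w).choose (n - s) : ℚ) * ((x - y) ^ (n - s) * y ^ s) := swap_tri d m _
        _ = ∑ s ∈ Finset.Icc d m, L s * ((x - y) ^ (n - s) * y ^ s) := by
            refine Finset.sum_congr rfl fun s hs => ?_
            rw [hLdef, Finset.sum_mul]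
    rw [lhs_eq, rhs_eq]
  rw [hdg]
  linarith [main]
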